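/- Let e : ℝ → ℝ^n be differentiable with e'(t) = A e(t) − r(t) + B v(t), where A ∈ ℝ^{n×n}, B ∈ ℝ^{n×m}, r : ℝ → ℝ^n, v : ℝ → ℝ^m. Let P, Q ∈ ℝ^{n×n} be symmetric positive definite with P A + Aᵀ P = −Q, and set V(t) := e(t)ᵀ P e(t). Then for any ε_R > 0 and ε_v > 0, for all t: V'(t) ≤ −(1 − ε_R − ε_v)·e(t)ᵀ Q e(t) + (1/ε_R)·‖Q^{−1/2} P r(t)‖² + (1/ε_v)·‖Q^{−1/2} P B v(t)‖². -/

import Mathlib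

open Filter Matrix

/-- Euclidean space `ℝ^n`. -/
abbrev E (n : ℕ) := EuclideanSpace ℝ (Fin n)

/-- Smallest eigenvalue of a (Hermitian) real matrix. -/
noncomputable def lamMin {n : ℕ} (M : Matrix (Fin n) (Fin n) ℝ) : ℝ :=
  if h : M.IsHermitian then ⨅ i, h.eigenvalues i else 0

/-- Largest eigenvalue of a (Hermitian) real matrix. -/
noncomputable def lamMax {n : ℕ} (M : Matrix (Fin n) (Fin n) ℝ) : ℝ :=
  if h : M.IsHermitian then ⨆ i, h.eigenvalues i else 0

open scoped Classical in
/-- The positive semidefinite square root `M^{1/2}` of a positive semidefinite matrix. -/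
noncomputable def matSqrt {n : ℕ} (M : Matrix (Fin n) (Fin n) ℝ) : Matrix (Fin n) (Fin n) ℝ :=
  if h : M.PosSemidef then
    h.1.eigenvectorUnitary.1 * diagonal (RCLike.ofReal ∘ Real.sqrt ∘ h.1.eigenvalues) *
      (star h.1.eigenvectorUnitary : Matrix (Fin n) (Fin n) ℝ)
  else 0

/-- `M^{-1/2} := (M^{1/2})⁻¹`. -/
noncomputable def invSqrt {n : ℕ} (M : Matrix (Fin n) (Fin n) ℝ) : Matrix (Fin n) (Fin n) ℝ :=
  (matSqrt M)⁻¹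

/-- Operator norm of a matrix induced by the Euclidean norms. -/
noncomputable def opNorm {m n : ℕ} (M : Matrix (Fin m) (Fin n) ℝ) : ℝ :=
  ‖LinearMap.toContinuousLinearMap (Matrix.toEuclideanLin M)‖

/-- Matrix-vector multiplication as a map between Euclidean spaces. -/
def mv {m n : ℕ} (M : Matrix (Fin m) (Fin n) ℝ) (v : E n) : E m := WithLp.toLp 2 (M.mulVec v)

lemma inner_eq_dot' {n : ℕ} (x y : E n) : (inner ℝ x y : ℝ) = x ⬝ᵥ y := by
  simp [PiLp.inner_apply, dotProduct, mul_comm]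

lemma dot_self_nonneg' {n : ℕ} (a : Fin n → ℝ) : 0 ≤ a ⬝ᵥ a :=
  Finset.sum_nonneg fun _ _ => mul_self_nonneg _

lemma dot_symm' {n : ℕ} (M : Matrix (Fin n) (Fin n) ℝ) (a b : Fin n → ℝ) :
    a ⬝ᵥ M *ᵥ b = (Mᵀ *ᵥ a) ⬝ᵥ b := by
  rw [dotProduct_mulVec, mulVec_transpose]

lemma cross_bound' {n : ℕ} (ε : ℝ) (hε : 0 < ε) (a b : Fin n → ℝ) :
    2 * (a ⬝ᵥ b) ≤ ε * (a ⬝ᵥ a) + (1/ε) * (b ⬝ᵥ b) := by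
  have h := dot_self_nonneg' (ε • a - b)
  have hexp : (ε • a - b) ⬝ᵥ (ε • a - b)
      = ε^2 * (a ⬝ᵥ a) - 2*ε*(a ⬝ᵥ b) + b ⬝ᵥ b := by
    simp [sub_dotProduct, dotProduct_sub, smul_dotProduct, dotProduct_smul,
      dotProduct_comm b a, smul_eq_mul]
    ring
  rw [hexp] at h
  have h2 : ε * (2 * (a ⬝ᵥ b)) ≤ ε * (ε * (a ⬝ᵥ a) + (1/ε) * (b ⬝ᵥ b)) := by
    have : ε * ((1/ε) * (b ⬝ᵥ b)) = b ⬝ᵥ b := by field_simp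
    nlinarith
  exact le_of_mul_le_mul_left h2 hε

lemma cross_bound_neg' {n : ℕ} (ε : ℝ) (hε : 0 < ε) (a b : Fin n → ℝ) :
    -(2 * (a ⬝ᵥ b)) ≤ ε * (a ⬝ᵥ a) + (1/ε) * (b ⬝ᵥ b) := by
  have h := dot_self_nonneg' (ε • a + b)
  have hexp : (ε • a + b) ⬝ᵥ (ε • a + b)
      = ε^2 * (a ⬝ᵥ a) + 2*ε*(a ⬝ᵥ b) + b ⬝ᵥ b := by
    simp [add_dotProduct, dotProduct_add, smul_dotProduct, dotProduct_smul,
      dotProduct_comm b a, smul_eq_mul]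
    ring
  rw [hexp] at h
  have h2 : ε * (-(2 * (a ⬝ᵥ b))) ≤ ε * (ε * (a ⬝ᵥ a) + (1/ε) * (b ⬝ᵥ b)) := by
    have : ε * ((1/ε) * (b ⬝ᵥ b)) = b ⬝ᵥ b := by field_simp
    nlinarith
  exact le_of_mul_le_mul_left h2 hε

lemma norm_sq_eq_dot' {n : ℕ} (x : E n) : ‖x‖ ^ 2 = x ⬝ᵥ x := by
  rw [← real_inner_self_eq_norm_sq, inner_eq_dot']

theorem stmt9 {n m : ℕ}
    (A : Matrix (Fin n) (Fin n) ℝ) (B : Matrix (Fin n) (Fin m) ℝ)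
    (r : ℝ → E n) (v : ℝ → E m)
    (e : ℝ → E n)
    (he : ∀ t : ℝ, HasDerivAt e (mv A (e t) - r t + mv B (v t)) t)
    (P Q : Matrix (Fin n) (Fin n) ℝ) (hP : P.PosDef) (hQ : Q.PosDef)
    (hLyap : P * A + Aᵀ * P = -Q)
    (εR εv : ℝ) (hεR : 0 < εR) (hεv : 0 < εv) :
    ∀ t : ℝ, deriv (fun s => e s ⬝ᵥ P.mulVec (e s)) t ≤
      -(1 - εR - εv) * (e t ⬝ᵥ Q.mulVec (e t)) +
        (1 / εR) * ‖mv (invSqrt Q) (mv P (r t))‖ ^ 2 +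
        (1 / εv) * ‖mv (invSqrt Q) (mv P (mv B (v t)))‖ ^ 2 := by
  intro t
  have hPt : Pᵀ = P := by
    have := hP.isHermitian
    rwa [Matrix.IsHermitian, conjTranspose_eq_transpose_of_trivial] at this
  -- square root facts
  set S := matSqrt Q with hSdef
  have hSeq : S = hQ.posSemidef.1.eigenvectorUnitary.1 * diagonal (RCLike.ofReal ∘ Real.sqrt ∘ hQ.posSemidef.1.eigenvalues) * (star hQ.posSemidef.1.eigenvectorUnitary : Matrix (Fin n) (Fin n) ℝ) := by
    rw [hSdef, matSqrt, dif_pos hQ.posSemidef]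
  have hSS : S * S = Q := by
    rw [hSeq]
    set U := hQ.posSemidef.1.eigenvectorUnitary with hU
    have hUU : (star U : Matrix (Fin n) (Fin n) ℝ) * U.1 = 1 := Unitary.coe_star_mul_self U
    have hspec := hQ.posSemidef.1.spectral_theorem
    rw [Unitary.conjStarAlgAut_apply] at hspec
    conv_rhs => rw [hspec]
    rw [show ∀ a b c d e f : Matrix (Fin n) (Fin n) ℝ, a * b * c * (d * e * f) = a * (b * (c * d) * e) * f from
      fun a b c d e f => by simp only [Matrix.mul_assoc], hUU, Matrix.mul_one, diagonal_mul_diagonal]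
    congr 3
    funext i
    simp [← Real.sqrt_mul (hQ.posSemidef.eigenvalues_nonneg i), Real.sqrt_mul_self (hQ.posSemidef.eigenvalues_nonneg i)]
  have hSt : Sᵀ = S := by
    rw [hSeq, transpose_mul, transpose_mul, diagonal_transpose]
    simp [Matrix.mul_assoc, Matrix.star_eq_conjTranspose]
  have hdet : IsUnit S.det := by
    have hq : S.det * S.det = Q.det := by rw [← det_mul, hSS]
    have hQd : Q.det ≠ 0 := ne_of_gt hQ.det_pos
    refine isUnit_iff_ne_zero.mpr fun h0 => hQd ?_
    rw [← hq, h0, mul_zero]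
  have hScancel : ∀ u : Fin n → ℝ, S *ᵥ (S⁻¹ *ᵥ u) = u := by
    intro u
    rw [mulVec_mulVec, mul_nonsing_inv _ hdet, one_mulVec]
  set x : E n := e t with hx
  set d : E n := mv A (e t) - r t + mv B (v t) with hd
  -- derivative computation
  have hLP : HasDerivAt (fun s => mv P (e s)) (mv P d) t := by
    have hmv : ∀ y : E n, LinearMap.toContinuousLinearMap (Matrix.toEuclideanLin P) y = mv P y := by
      intro y; rfl
    have := (LinearMap.toContinuousLinearMap
      (Matrix.toEuclideanLin P)).hasFDerivAt.comp_hasDerivAt t (he t)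
    exact this
  have hinner : HasDerivAt (fun s => (inner ℝ (e s) (mv P (e s)) : ℝ))
      ((inner ℝ x (mv P d) : ℝ) + (inner ℝ d (mv P x) : ℝ)) t :=
    HasDerivAt.inner ℝ (he t) hLP
  have hderiv : deriv (fun s => e s ⬝ᵥ P.mulVec (e s)) t
      = x ⬝ᵥ P *ᵥ d + d ⬝ᵥ P *ᵥ x := by
    have hfun : (fun s => e s ⬝ᵥ P.mulVec (e s)) = fun s => (inner ℝ (e s) (mv P (e s)) : ℝ) := by
      funext s; rw [inner_eq_dot']; rfl
    rw [hfun, hinner.deriv, inner_eq_dot', inner_eq_dot']; rfl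
  -- symmetric rewriting
  have hsymm : ∀ a b : Fin n → ℝ, a ⬝ᵥ P *ᵥ b = b ⬝ᵥ P *ᵥ a := by
    intro a b; rw [dot_symm', hPt, dotProduct_comm]
  -- cross term vectors
  set wr : E n := mv (invSqrt Q) (mv P (r t)) with hwr
  set wv : E n := mv (invSqrt Q) (mv P (mv B (v t))) with hwv
  set y : Fin n → ℝ := S *ᵥ x with hy
  have hyy : y ⬝ᵥ y = x ⬝ᵥ Q *ᵥ x := by
    rw [hy, dot_symm', hSt, mulVec_mulVec, hSS]
    exact dotProduct_comm _ _
  have hcrossr : x ⬝ᵥ P *ᵥ (r t) = y ⬝ᵥ (wr : Fin n → ℝ) := by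
    have h1 : (P *ᵥ (r t) : Fin n → ℝ) = S *ᵥ ((wr : Fin n → ℝ)) := by
      rw [hwr]; show _ = S *ᵥ (S⁻¹ *ᵥ (P *ᵥ (r t)))
      rw [hScancel]
    rw [h1, dot_symm', hSt]
  have hcrossv : x ⬝ᵥ P *ᵥ ((mv B (v t)) : Fin n → ℝ) = y ⬝ᵥ (wv : Fin n → ℝ) := by
    have h1 : (P *ᵥ ((mv B (v t)) : Fin n → ℝ)) = S *ᵥ ((wv : Fin n → ℝ)) := by
      rw [hwv]; show _ = S *ᵥ (S⁻¹ *ᵥ (P *ᵥ ((mv B (v t)) : Fin n → ℝ)))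
      rw [hScancel]
    rw [h1, dot_symm', hSt]
  -- main algebraic identity
  obtain ⟨r', hr'⟩ : ∃ r' : Fin n → ℝ, r' = (r t : E n) := ⟨r t, rfl⟩
  have hPAx : 2 * (x ⬝ᵥ P *ᵥ (A *ᵥ x)) = -(x ⬝ᵥ Q *ᵥ x) := by
    have h1 : x ⬝ᵥ (P * A + Aᵀ * P) *ᵥ x = x ⬝ᵥ (-Q) *ᵥ x := by rw [hLyap]
    rw [add_mulVec, dotProduct_add, ← mulVec_mulVec, ← mulVec_mulVec] at h1
    have h2 : x ⬝ᵥ Aᵀ *ᵥ (P *ᵥ x) = x ⬝ᵥ P *ᵥ (A *ᵥ x) := by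
      rw [dot_symm', transpose_transpose]
      exact hsymm _ _
    rw [h2] at h1
    rw [neg_mulVec, dotProduct_neg] at h1
    linarith
  have hmain : x ⬝ᵥ P *ᵥ d + d ⬝ᵥ P *ᵥ x
      = -(x ⬝ᵥ Q *ᵥ x) - 2 * (y ⬝ᵥ (wr : Fin n → ℝ)) + 2 * (y ⬝ᵥ (wv : Fin n → ℝ)) := by
    have hdx : (d : Fin n → ℝ) = A *ᵥ x - r' + B *ᵥ (v t) := by
      funext i
      simp [hd, mv, PiLp.add_apply, PiLp.sub_apply, hr', hx]
    have hcrossr' : x ⬝ᵥ P *ᵥ r' = y ⬝ᵥ (wr : Fin n → ℝ) := by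
      rw [hr']; exact hcrossr
    have hcrossv' : x ⬝ᵥ P *ᵥ (B *ᵥ (v t : Fin m → ℝ)) = y ⬝ᵥ (wv : Fin n → ℝ) := hcrossv
    rw [hsymm d x, hdx, mulVec_add, mulVec_sub, dotProduct_add, dotProduct_sub,
      hcrossr', hcrossv']
    linarith [hPAx]
  -- bounds
  have hbr : -(2 * (y ⬝ᵥ (wr : Fin n → ℝ)))
      ≤ εR * (y ⬝ᵥ y) + (1/εR) * ((wr : Fin n → ℝ) ⬝ᵥ (wr : Fin n → ℝ)) :=
    cross_bound_neg' εR hεR y wr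
  have hbv : 2 * (y ⬝ᵥ (wv : Fin n → ℝ))
      ≤ εv * (y ⬝ᵥ y) + (1/εv) * ((wv : Fin n → ℝ) ⬝ᵥ (wv : Fin n → ℝ)) :=
    cross_bound' εv hεv y wv
  have hnr : ‖wr‖ ^ 2 = (wr : Fin n → ℝ) ⬝ᵥ (wr : Fin n → ℝ) := norm_sq_eq_dot' wr
  have hnv : ‖wv‖ ^ 2 = (wv : Fin n → ℝ) ⬝ᵥ (wv : Fin n → ℝ) := norm_sq_eq_dot' wv
  rw [hderiv, hmain, hnr, hnv]
  rw [hyy] at hbr hbv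
  linarith
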